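/- Let W be a finite reflection group on ℝ^q with closed chamber C, let ρ ∈ C, and suppose ξ ∈ C lies in the interior of co(W·ρ). Then there exist s ∈ (0,1) and ε = 1 - s > 0 such that ξ ∈ co(W·(s·ρ)), and consequently ⟨ξ - ρ, t⟩ ≤ -ε·⟨ρ, t⟩ for all t ∈ C. -/

import Mathlib

open scoped RealInnerProductSpace Classical Pointwise

namespace Stmt6Aux

variable {q : ℕ}

local notation "E" => EuclideanSpace ℝ (Fin q)

noncomputable def rf (α : E) : E ≃ₗᵢ[ℝ] E := Submodule.reflection ((ℝ ∙ α)ᗮ)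

lemma rf_apply (α : E) (x : E) :
    rf α x = x - (2 * ⟪α, x⟫ / ‖α‖ ^ 2) • α := by
  have hpr : (((ℝ ∙ α)ᗮ).starProjection x : E) = x - (⟪α, x⟫ / ‖α‖ ^ 2) • α := by
    rw [Submodule.starProjection_orthogonal_val, Submodule.starProjection_singleton]
    norm_num
  rw [rf, Submodule.reflection_apply, hpr]
  have h2 : (2 : ℕ) • (x - (⟪α, x⟫ / ‖α‖ ^ 2) • α) =
      (2:ℝ) • (x - (⟪α, x⟫ / ‖α‖ ^ 2) • α) := by
    simp [two_smul, two_smul]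
  rw [h2, smul_sub]
  module

lemma rf_apply_self (α : E) (hα : α ≠ 0) : rf α α = -α := by
  rw [rf_apply α, real_inner_self_eq_norm_sq]
  have : ‖α‖ ^ 2 ≠ 0 := pow_ne_zero 2 (norm_ne_zero_iff.mpr hα)
  rw [show (2 * ‖α‖^2 / ‖α‖^2 : ℝ) = 2 by field_simp]
  module

lemma rf_mul_self (α : E) : rf α * rf α = 1 := Submodule.reflection_mul_reflection _

lemma rf_rf (α : E) (x : E) : rf α (rf α x) = x := Submodule.reflection_reflection _ x

lemma rf_inv (α : E) : (rf α)⁻¹ = rf α := Submodule.reflection_inv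

lemma rf_smul {α : E} (hα : α ≠ 0) {c : ℝ} (hc : c ≠ 0) : rf (c • α) = rf α := by
  ext x
  rw [rf_apply, rf_apply]
  have key : (2 * ⟪c • α, x⟫ / ‖c • α‖ ^ 2) • (c • α) = (2 * ⟪α, x⟫ / ‖α‖ ^ 2) • α := by
    rw [real_inner_smul_left, norm_smul, smul_smul]
    congr 1
    have hn : ‖α‖ ≠ 0 := norm_ne_zero_iff.mpr hα
    rw [Real.norm_eq_abs, mul_pow, sq_abs]
    field_simp
  rw [key]

lemma rf_neg {α : E} (hα : α ≠ 0) : rf (-α) = rf α := by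
  rw [show (-α) = (-1 : ℝ) • α by module, rf_smul hα (by norm_num)]

lemma rf_conj (u : E ≃ₗᵢ[ℝ] E) (α : E) : rf (u α) = u * rf α * u⁻¹ := by
  ext x : 1
  have h1 : ‖u α‖ = ‖α‖ := u.norm_map α
  have h2 : ⟪u α, x⟫ = ⟪α, u⁻¹ x⟫ := by
    conv_lhs => rw [show x = u (u⁻¹ x) by simp [LinearIsometryEquiv.coe_inv]]
    exact u.inner_map_map α (u⁻¹ x)
  simp only [LinearIsometryEquiv.coe_mul, Function.comp_apply]
  rw [rf_apply, rf_apply, h1, h2, map_sub, map_smul]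
  congr 1
  simp [LinearIsometryEquiv.coe_inv]

/-- conic combination -/
def Pos (S : Finset E) (x : E) : Prop :=
  ∃ c : E → ℝ, (∀ γ, 0 ≤ c γ) ∧ x = ∑ γ ∈ S, c γ • γ

lemma pos_self {S : Finset E} {x : E} (hx : x ∈ S) : Pos S x := by
  refine ⟨fun γ => if γ = x then 1 else 0, fun γ => by by_cases h : γ = x <;> simp [h], ?_⟩
  have : ∀ γ ∈ S, (if γ = x then (1:ℝ) else 0) • γ = if γ = x then γ else 0 := by
    intro γ _; split <;> simp
  rw [Finset.sum_congr rfl this, Finset.sum_ite_eq' S x (fun γ => γ), if_pos hx]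

lemma pos_subst {S : Finset E} {b : E} (hbe : Pos (S.erase b) b) {x : E}
    (hx : Pos S x) : Pos (S.erase b) x := by
  by_cases hb : b ∈ S
  · obtain ⟨c, hc, hcx⟩ := hx
    obtain ⟨e, he, heb⟩ := hbe
    have h1 : x = c b • b + ∑ γ ∈ S.erase b, c γ • γ := by
      rw [hcx, ← Finset.add_sum_erase _ _ hb]
    have h2 : c b • b = ∑ γ ∈ S.erase b, (c b * e γ) • γ := by
      have h3 := congrArg (fun y : EuclideanSpace ℝ (Fin q) => c b • y) heb
      simpa [Finset.smul_sum, smul_smul] using h3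
    refine ⟨fun γ => c b * e γ + c γ, fun γ => add_nonneg (mul_nonneg (hc b) (he γ)) (hc γ), ?_⟩
    rw [h1, h2, ← Finset.sum_add_distrib]
    exact Finset.sum_congr rfl (fun γ _ => (add_smul _ _ _).symm)
  · rwa [Finset.erase_eq_of_notMem hb]

lemma pos_of_smul {T : Finset E} {x : E} {r : ℝ} (hr : 0 < r) (d : E → ℝ)
    (hd : ∀ γ, 0 ≤ d γ) (heq : r • x = ∑ γ ∈ T, d γ • γ) : Pos T x := by
  refine ⟨fun γ => d γ / r, fun γ => div_nonneg (hd γ) hr.le, ?_⟩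
  have : x = r⁻¹ • (r • x) := by rw [smul_smul, inv_mul_cancel₀ hr.ne', one_smul]
  rw [this, heq, Finset.smul_sum]
  refine Finset.sum_congr rfl (fun γ _ => ?_)
  rw [smul_smul]
  dsimp only
  rw [div_eq_inv_mul]


structure Ctx (q : ℕ) where
  P : Finset (EuclideanSpace ℝ (Fin q))
  hv : EuclideanSpace ℝ (Fin q)
  W : Subgroup (EuclideanSpace ℝ (Fin q) ≃ₗᵢ[ℝ] EuclideanSpace ℝ (Fin q))
  pos : ∀ γ ∈ P, 0 < ⟪hv, γ⟫
  gen : ∀ γ ∈ P, rf γ ∈ W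
  stab : ∀ w ∈ W, ∀ γ ∈ P, w γ ∈ P ∨ -(w γ) ∈ P
  sub : (W : Set (EuclideanSpace ℝ (Fin q) ≃ₗᵢ[ℝ] EuclideanSpace ℝ (Fin q))) ⊆
    ↑(Subgroup.closure {u | ∃ γ ∈ P, u = rf γ})
  Δ : Finset (EuclideanSpace ℝ (Fin q))
  ΔP : Δ ⊆ P
  Δgen : ∀ γ ∈ P, Pos Δ γ
  Δmin : ∀ S ⊆ P, (∀ γ ∈ P, Pos S γ) → Δ.card ≤ S.card

namespace Ctx

variable (S : Ctx q)

lemma mem_ne_zero {γ : E} (h : γ ∈ S.P) : γ ≠ 0 := by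
  intro h0
  have := S.pos γ h
  rw [h0, inner_zero_right] at this
  exact lt_irrefl 0 this

lemma not_neg_mem {γ : E} (h : γ ∈ S.P) : -γ ∉ S.P := by
  intro hn
  have h1 := S.pos γ h
  have h2 := S.pos (-γ) hn
  rw [inner_neg_right] at h2
  linarith

lemma inner_hv_sum (d : (E) → ℝ) (T : Finset E) :
    ⟪S.hv, ∑ γ ∈ T, d γ • γ⟫ = ∑ γ ∈ T, d γ * ⟪S.hv, γ⟫ := by
  rw [inner_sum]
  exact Finset.sum_congr rfl (fun γ _ => real_inner_smul_right _ _ _)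

lemma term_le_sum {T : Finset E} (hT : T ⊆ S.P) (d : (E) → ℝ) (hd : ∀ γ, 0 ≤ d γ)
    {b : E} (hb : b ∈ T) : d b * ⟪S.hv, b⟫ ≤ ∑ γ ∈ T, d γ * ⟪S.hv, γ⟫ :=
  Finset.single_le_sum (fun γ hγ => mul_nonneg (hd γ) (S.pos γ (hT hγ)).le) hb

/-- contradiction from a simple root being a conic combination of the others -/
lemma erase_contr {b : E} (hb : b ∈ S.Δ) (hbe : Pos (S.Δ.erase b) b) : False := by
  have hall : ∀ γ ∈ S.P, Pos (S.Δ.erase b) γ := fun γ hγ => pos_subst hbe (S.Δgen γ hγ)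
  have hc := S.Δmin _ ((Finset.erase_subset _ _).trans S.ΔP) hall
  rw [Finset.card_erase_of_mem hb] at hc
  have := Finset.card_pos.mpr ⟨b, hb⟩
  omega

/-- Humphreys 1.3 : distinct simple roots have nonpositive inner products -/
lemma lem13 {α β : E} (hα : α ∈ S.Δ) (hβ : β ∈ S.Δ) (hne : α ≠ β) : ⟪α, β⟫ ≤ 0 := by
  by_contra hp
  push_neg at hp
  have hα0 : α ≠ 0 := S.mem_ne_zero (S.ΔP hα)
  have hn : (0:ℝ) < ‖α‖ ^ 2 := pow_pos (norm_pos_iff.mpr hα0) 2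
  set k : ℝ := 2 * ⟪α, β⟫ / ‖α‖ ^ 2 with hk
  have hkpos : 0 < k := div_pos (by linarith) hn
  have hrfl : rf α β = β - k • α := rf_apply α β
  have hvα := S.pos α (S.ΔP hα)
  have hvβ := S.pos β (S.ΔP hβ)
  rcases S.stab (rf α) (S.gen α (S.ΔP hα)) β (S.ΔP hβ) with hm | hm
  · -- β - k • α ∈ P
    rw [hrfl] at hm
    obtain ⟨d, hd, hdeq⟩ := S.Δgen _ hm
    have hβeq : β = k • α + ∑ γ ∈ S.Δ, d γ • γ := by rw [← hdeq]; module
    have hsplit : ∑ γ ∈ S.Δ, d γ * ⟪S.hv, γ⟫ ≥ d β * ⟪S.hv, β⟫ :=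
      S.term_le_sum S.ΔP d hd hβ
    have hpair : ⟪S.hv, β⟫ = k * ⟪S.hv, α⟫ + ∑ γ ∈ S.Δ, d γ * ⟪S.hv, γ⟫ := by
      rw [hβeq, inner_add_right, real_inner_smul_right, S.inner_hv_sum]
    by_cases hdβ : 1 ≤ d β
    · nlinarith [mul_le_mul_of_nonneg_right hdβ hvβ.le]
    · -- d β < 1 : β is a conic combination of the other simple roots
      push_neg at hdβ
      apply S.erase_contr hβ
      have hsum : β = d β • β + ∑ γ ∈ S.Δ.erase β, (d γ + if γ = α then k else 0) • γ := by
        have e1 : ∑ γ ∈ S.Δ.erase β, (if γ = α then k else 0) • γ = k • α := by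
          have : ∀ γ ∈ S.Δ.erase β, (if γ = α then (k:ℝ) else 0) • γ
              = if γ = α then k • γ else 0 := by intro γ _; split <;> simp
          rw [Finset.sum_congr rfl this, Finset.sum_ite_eq' _ α (fun γ => k • γ),
            if_pos (Finset.mem_erase.mpr ⟨hne, hα⟩)]
        calc β = k • α + ∑ γ ∈ S.Δ, d γ • γ := hβeq
          _ = k • α + (d β • β + ∑ γ ∈ S.Δ.erase β, d γ • γ) := by
              rw [← Finset.add_sum_erase _ _ hβ]
          _ = d β • β + (∑ γ ∈ S.Δ.erase β, d γ • γ
              + ∑ γ ∈ S.Δ.erase β, (if γ = α then k else 0) • γ) := by rw [e1]; module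
          _ = d β • β + ∑ γ ∈ S.Δ.erase β, (d γ + if γ = α then k else 0) • γ := by
              rw [← Finset.sum_add_distrib]
              congr 1
              exact Finset.sum_congr rfl (fun γ _ => (add_smul _ _ _).symm)
      refine pos_of_smul (r := 1 - d β) (by linarith)
        (fun γ => d γ + if γ = α then k else 0)
        (fun γ => add_nonneg (hd γ) (by split <;> [exact hkpos.le; exact le_refl 0])) ?_
      rw [sub_smul, one_smul]
      nth_rewrite 1 [hsum]
      module
  · -- k • α - β ∈ P
    have hm' : k • α - β ∈ S.P := by
      have : -(rf α β) = k • α - β := by rw [hrfl]; module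
      rwa [this] at hm
    obtain ⟨d, hd, hdeq⟩ := S.Δgen _ hm'
    have hαeq : k • α = β + ∑ γ ∈ S.Δ, d γ • γ := by rw [← hdeq]; module
    have hsplit : ∑ γ ∈ S.Δ, d γ * ⟪S.hv, γ⟫ ≥ d α * ⟪S.hv, α⟫ :=
      S.term_le_sum S.ΔP d hd hα
    have hpair : k * ⟪S.hv, α⟫ = ⟪S.hv, β⟫ + ∑ γ ∈ S.Δ, d γ * ⟪S.hv, γ⟫ := by
      rw [← real_inner_smul_right, hαeq, inner_add_right, S.inner_hv_sum]
    by_cases hdα : k ≤ d α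
    · nlinarith [mul_le_mul_of_nonneg_right hdα hvα.le]
    · push_neg at hdα
      apply S.erase_contr hα
      have hsum : k • α = d α • α + ∑ γ ∈ S.Δ.erase α, (d γ + if γ = β then 1 else 0) • γ := by
        have e1 : ∑ γ ∈ S.Δ.erase α, (if γ = β then (1:ℝ) else 0) • γ = β := by
          have : ∀ γ ∈ S.Δ.erase α, (if γ = β then (1:ℝ) else 0) • γ
              = if γ = β then γ else 0 := by intro γ _; split <;> simp
          rw [Finset.sum_congr rfl this, Finset.sum_ite_eq' _ β (fun γ => γ),
            if_pos (Finset.mem_erase.mpr ⟨hne.symm, hβ⟩)]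
        calc k • α = β + ∑ γ ∈ S.Δ, d γ • γ := hαeq
          _ = β + (d α • α + ∑ γ ∈ S.Δ.erase α, d γ • γ) := by
              rw [← Finset.add_sum_erase _ _ hα]
          _ = d α • α + (∑ γ ∈ S.Δ.erase α, d γ • γ
              + ∑ γ ∈ S.Δ.erase α, (if γ = β then (1:ℝ) else 0) • γ) := by rw [e1]; module
          _ = d α • α + ∑ γ ∈ S.Δ.erase α, (d γ + if γ = β then 1 else 0) • γ := by
              rw [← Finset.sum_add_distrib]
              congr 1
              exact Finset.sum_congr rfl (fun γ _ => (add_smul _ _ _).symm)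
      refine pos_of_smul (r := k - d α) (by linarith)
        (fun γ => d γ + if γ = β then 1 else 0)
        (fun γ => add_nonneg (hd γ) (by split <;> norm_num)) ?_
      rw [sub_smul]
      nth_rewrite 1 [hsum]
      module


/-- coefficients of a vanishing combination of simple roots all vanish -/
lemma zlem (f : (E) → ℝ) (hf : ∑ δ ∈ S.Δ, f δ • δ = 0) : ∀ δ ∈ S.Δ, f δ = 0 := by
  set A := S.Δ.filter (fun δ => 0 ≤ f δ) with hA
  set B := S.Δ.filter (fun δ => ¬ 0 ≤ f δ) with hB
  set u : E := ∑ δ ∈ A, f δ • δ with hu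
  have hsplit : u + ∑ δ ∈ B, f δ • δ = 0 := by
    rw [hu, Finset.sum_filter_add_sum_filter_not]
    exact hf
  have huB : u = ∑ δ ∈ B, (-(f δ)) • δ := by
    have : u = -∑ δ ∈ B, f δ • δ := by
      rw [eq_neg_iff_add_eq_zero]; exact hsplit
    rw [this, ← Finset.sum_neg_distrib]
    exact Finset.sum_congr rfl (fun δ _ => (neg_smul _ _).symm)
  have huu : ⟪u, u⟫ ≤ 0 := by
    nth_rewrite 2 [huB]
    rw [hu, sum_inner]
    apply Finset.sum_nonpos
    intro δ hδ
    rw [real_inner_smul_left, inner_sum]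
    apply mul_nonpos_of_nonneg_of_nonpos (Finset.mem_filter.mp hδ).2
    apply Finset.sum_nonpos
    intro γ hγ
    rw [real_inner_smul_right]
    have hδA := Finset.mem_filter.mp hδ
    have hγB := Finset.mem_filter.mp hγ
    have hne : δ ≠ γ := by
      intro h; rw [h] at hδA; exact hγB.2 hδA.2
    exact mul_nonpos_of_nonneg_of_nonpos (by linarith [not_le.mp hγB.2])
      (S.lem13 hδA.1 hγB.1 hne)
  have hu0 : u = 0 := by
    have := real_inner_self_nonneg (x := u)
    exact inner_self_eq_zero.mp (le_antisymm huu this)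
  have hAzero : ∀ δ ∈ A, f δ = 0 := by
    have h1 : ∑ δ ∈ A, f δ * ⟪S.hv, δ⟫ = 0 := by
      rw [← S.inner_hv_sum, ← hu, hu0, inner_zero_right]
    have h2 : ∀ δ ∈ A, 0 ≤ f δ * ⟪S.hv, δ⟫ := fun δ hδ =>
      mul_nonneg (Finset.mem_filter.mp hδ).2
        (S.pos δ (S.ΔP (Finset.mem_filter.mp hδ).1)).le
    intro δ hδ
    have := (Finset.sum_eq_zero_iff_of_nonneg h2).mp h1 δ hδ
    have hpos := S.pos δ (S.ΔP (Finset.mem_filter.mp hδ).1)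
    rcases mul_eq_zero.mp this with h | h
    · exact h
    · exact absurd h hpos.ne'
  have hBzero : ∀ δ ∈ B, False := by
    have h1 : ∑ δ ∈ B, (-(f δ)) * ⟪S.hv, δ⟫ = 0 := by
      rw [← S.inner_hv_sum, ← huB, hu0, inner_zero_right]
    have h2 : ∀ δ ∈ B, 0 ≤ (-(f δ)) * ⟪S.hv, δ⟫ := fun δ hδ =>
      mul_nonneg (by linarith [not_le.mp (Finset.mem_filter.mp hδ).2])
        (S.pos δ (S.ΔP (Finset.mem_filter.mp hδ).1)).le
    intro δ hδ
    have := (Finset.sum_eq_zero_iff_of_nonneg h2).mp h1 δ hδ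
    have hpos := S.pos δ (S.ΔP (Finset.mem_filter.mp hδ).1)
    have hflt := not_le.mp (Finset.mem_filter.mp hδ).2
    rcases mul_eq_zero.mp this with h | h
    · linarith [neg_eq_zero.mp h]
    · exact hpos.ne' h
  intro δ hδ
  by_cases h : 0 ≤ f δ
  · exact hAzero δ (Finset.mem_filter.mpr ⟨hδ, h⟩)
  · exact absurd (Finset.mem_filter.mpr ⟨hδ, h⟩) (fun hm => hBzero δ hm)

/-- Humphreys 1.4 : a simple reflection sends non-proportional positive roots
to positive roots -/
lemma lem14a {δ γ : E} (hδ : δ ∈ S.Δ) (hγ : γ ∈ S.P) (hnp : ∀ c : ℝ, γ ≠ c • δ) :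
    rf δ γ ∈ S.P := by
  set k : ℝ := 2 * ⟪δ, γ⟫ / ‖δ‖ ^ 2 with hk
  have hrfl : rf δ γ = γ - k • δ := rf_apply δ γ
  rcases S.stab (rf δ) (S.gen δ (S.ΔP hδ)) γ hγ with hm | hm
  · exact hm
  · exfalso
    have hm' : k • δ - γ ∈ S.P := by
      have : -(rf δ γ) = k • δ - γ := by rw [hrfl]; module
      rwa [this] at hm
    obtain ⟨c, hc, hceq⟩ := S.Δgen γ hγ
    obtain ⟨d, hd, hdeq⟩ := S.Δgen _ hm'
    set F : (E) → ℝ := fun μ => c μ + d μ - (if μ = δ then k else 0) with hF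
    have hFsum : ∑ μ ∈ S.Δ, F μ • μ = 0 := by
      have e1 : ∑ μ ∈ S.Δ, (if μ = δ then (k:ℝ) else 0) • μ = k • δ := by
        have : ∀ μ ∈ S.Δ, (if μ = δ then (k:ℝ) else 0) • μ
            = if μ = δ then k • μ else 0 := by intro μ _; split <;> simp
        rw [Finset.sum_congr rfl this, Finset.sum_ite_eq' _ δ (fun μ => k • μ), if_pos hδ]
      have : ∑ μ ∈ S.Δ, F μ • μ
          = ∑ μ ∈ S.Δ, c μ • μ + ∑ μ ∈ S.Δ, d μ • μ
            - ∑ μ ∈ S.Δ, (if μ = δ then (k:ℝ) else 0) • μ := by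
        rw [← Finset.sum_add_distrib, ← Finset.sum_sub_distrib]
        refine Finset.sum_congr rfl (fun μ _ => ?_)
        rw [hF]; dsimp only; rw [sub_smul, add_smul]
      rw [this, e1, ← hceq, ← hdeq]
      module
    have hFz := S.zlem F hFsum
    have hczero : ∀ μ ∈ S.Δ, μ ≠ δ → c μ = 0 := by
      intro μ hμ hne
      have := hFz μ hμ
      rw [hF] at this
      dsimp only at this
      rw [if_neg hne] at this
      have := hc μ
      have := hd μ
      linarith [hFz μ hμ]
    have hγδ : γ = c δ • δ := by
      rw [hceq]
      rw [Finset.sum_eq_single_of_mem δ hδ]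
      intro μ hμ hne
      rw [hczero μ hμ hne, zero_smul]
    exact hnp (c δ) hγδ

/- positive roots proportional to a positive root have positive ratio -/
lemma par_pos {δ γ : E} (hδ : δ ∈ S.P) (hγ : γ ∈ S.P) {c : ℝ} (hc : γ = c • δ) :
    0 < c := by
  have h1 := S.pos γ hγ
  have h2 := S.pos δ hδ
  rw [hc, real_inner_smul_right] at h1
  by_contra h
  push_neg at h
  nlinarith


/-- the set of positive roots sent to negative roots -/
noncomputable def NN (w : EuclideanSpace ℝ (Fin q) ≃ₗᵢ[ℝ] EuclideanSpace ℝ (Fin q)) :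
    Finset (EuclideanSpace ℝ (Fin q)) := S.P.filter (fun γ => -(w γ) ∈ S.P)

lemma count_lt {w : EuclideanSpace ℝ (Fin q) ≃ₗᵢ[ℝ] EuclideanSpace ℝ (Fin q)}
    (hw : w ∈ S.W) {δ : EuclideanSpace ℝ (Fin q)} (hδ : δ ∈ S.Δ)
    (hneg : -(w δ) ∈ S.P) : (S.NN (w * rf δ)).card < (S.NN w).card := by
  have hδP := S.ΔP hδ
  have hδ0 : δ ≠ 0 := S.mem_ne_zero hδP
  have himg : (S.NN (w * rf δ)).image (rf δ) ⊆ (S.NN w).erase δ := by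
    intro x hx
    obtain ⟨γ, hγ, rfl⟩ := Finset.mem_image.mp hx
    obtain ⟨hγP, hγneg⟩ := Finset.mem_filter.mp hγ
    have happ : (w * rf δ) γ = w (rf δ γ) := rfl
    rw [happ] at hγneg
    have hrfγP : rf δ γ ∈ S.P := by
      by_cases hpar : ∃ c : ℝ, γ = c • δ
      · exfalso
        obtain ⟨c, hc⟩ := hpar
        have hcpos : 0 < c := S.par_pos hδP hγP hc
        have h1 : rf δ γ = -(c • δ) := by
          rw [hc, map_smul, rf_apply_self δ hδ0, smul_neg]
        have h2 : -(w (rf δ γ)) = c • (w δ) := by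
          rw [h1, map_neg, map_smul, neg_neg]
        rw [h2] at hγneg
        have h3 := S.pos _ hγneg
        have h4 := S.pos _ hneg
        rw [real_inner_smul_right] at h3
        rw [inner_neg_right] at h4
        nlinarith
      · push_neg at hpar
        exact S.lem14a hδ hγP hpar
    apply Finset.mem_erase.mpr
    constructor
    · intro heq
      have : γ = -δ := by
        have := congrArg (rf δ) heq
        rwa [rf_rf, rf_apply_self δ hδ0] at this
      rw [this] at hγP
      exact S.not_neg_mem hδP hγP
    · exact Finset.mem_filter.mpr ⟨hrfγP, hγneg⟩
  have hinj : Set.InjOn (rf δ) (S.NN (w * rf δ)) :=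
    fun a _ b _ hab => (rf δ).injective hab
  have h1 : (S.NN (w * rf δ)).card = ((S.NN (w * rf δ)).image (rf δ)).card :=
    (Finset.card_image_of_injOn hinj).symm
  have hδNN : δ ∈ S.NN w := Finset.mem_filter.mpr ⟨hδP, hneg⟩
  have h2 : ((S.NN w).erase δ).card = (S.NN w).card - 1 :=
    Finset.card_erase_of_mem hδNN
  have h3 := Finset.card_le_card himg
  have h4 := Finset.card_pos.mpr ⟨δ, hδNN⟩
  omega

lemma prod_mem_W (L : List (EuclideanSpace ℝ (Fin q))) (hL : ∀ δ ∈ L, δ ∈ S.P) :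
    (L.map rf).prod ∈ S.W := by
  induction L with
  | nil => simp
  | cons a M ih =>
    rw [List.map_cons, List.prod_cons]
    exact S.W.mul_mem (S.gen a (hL a (List.mem_cons_self (a := a) (l := M))))
      (ih (fun δ hδ => hL δ (List.mem_cons_of_mem a hδ)))

lemma prod_rf_reverse (L : List (EuclideanSpace ℝ (Fin q))) :
    ((L.reverse.map rf).prod) = ((L.map rf).prod)⁻¹ := by
  induction L with
  | nil => simp
  | cons a M ih =>
    rw [List.reverse_cons, List.map_append, List.prod_append, List.map_cons,
      List.prod_cons, ih, List.map_cons, List.map_nil, List.prod_cons, List.prod_nil,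
      mul_one, mul_inv_rev, rf_inv]

/-- every element of W is a product of simple reflections -/
lemma exists_word {w : EuclideanSpace ℝ (Fin q) ≃ₗᵢ[ℝ] EuclideanSpace ℝ (Fin q)}
    (hw : w ∈ S.W) :
    ∃ L : List (EuclideanSpace ℝ (Fin q)), (∀ δ ∈ L, δ ∈ S.Δ) ∧ (L.map rf).prod = w := by
  set WΔ := Subgroup.closure {u : EuclideanSpace ℝ (Fin q) ≃ₗᵢ[ℝ] EuclideanSpace ℝ (Fin q) |
    ∃ δ ∈ S.Δ, u = rf δ} with hWΔ
  -- Stage A : each rf γ, γ ∈ P, lies in WΔ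
  have stageA : ∀ γ ∈ S.P, rf γ ∈ WΔ := by
    by_contra hbad
    push_neg at hbad
    set Bad := S.P.filter (fun γ => rf γ ∉ WΔ) with hBad
    obtain ⟨γ₀, hγ₀, hmin⟩ := Finset.exists_min_image Bad (fun γ => ⟪S.hv, γ⟫)
      (by obtain ⟨γ, hγ, hγn⟩ := hbad; exact ⟨γ, Finset.mem_filter.mpr ⟨hγ, hγn⟩⟩)
    obtain ⟨hγ₀P, hγ₀n⟩ := Finset.mem_filter.mp hγ₀
    obtain ⟨c, hc, hceq⟩ := S.Δgen γ₀ hγ₀P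
    have hnorm : (0:ℝ) < ⟪γ₀, γ₀⟫ := by
      rw [real_inner_self_eq_norm_sq]
      exact pow_pos (norm_pos_iff.mpr (S.mem_ne_zero hγ₀P)) 2
    have hterm : ∃ δ ∈ S.Δ, 0 < c δ * ⟪γ₀, δ⟫ := by
      by_contra hall
      push_neg at hall
      have : ⟪γ₀, γ₀⟫ ≤ 0 := by
        nth_rewrite 2 [hceq]
        rw [inner_sum]
        apply Finset.sum_nonpos
        intro δ hδ
        rw [real_inner_smul_right]
        exact hall δ hδ
      linarith
    obtain ⟨δ, hδ, hδpos⟩ := hterm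
    have hγδ : 0 < ⟪δ, γ₀⟫ := by
      rcases lt_trichotomy (⟪γ₀, δ⟫) 0 with h | h | h
      · nlinarith [hc δ]
      · rw [h, mul_zero] at hδpos; linarith
      · rwa [real_inner_comm]
    by_cases hpar : ∃ c' : ℝ, γ₀ = c' • δ
    · obtain ⟨c', hc'⟩ := hpar
      have hc'0 : c' ≠ 0 := by
        intro h; rw [h, zero_smul] at hc'; exact S.mem_ne_zero hγ₀P hc'
      have : rf γ₀ = rf δ := by
        rw [hc']; exact rf_smul (S.mem_ne_zero (S.ΔP hδ)) hc'0
      rw [this] at hγ₀n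
      exact hγ₀n (Subgroup.subset_closure ⟨δ, hδ, rfl⟩)
    · push_neg at hpar
      set γ' := rf δ γ₀ with hγ'
      have hγ'P : γ' ∈ S.P := S.lem14a hδ hγ₀P hpar
      set k : ℝ := 2 * ⟪δ, γ₀⟫ / ‖δ‖ ^ 2 with hk
      have hkpos : 0 < k :=
        div_pos (by linarith) (pow_pos (norm_pos_iff.mpr (S.mem_ne_zero (S.ΔP hδ))) 2)
      have hlt : ⟪S.hv, γ'⟫ < ⟪S.hv, γ₀⟫ := by
        rw [hγ', rf_apply, inner_sub_right, real_inner_smul_right]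
        have := S.pos δ (S.ΔP hδ)
        nlinarith
      have hγ'n : rf γ' ∈ WΔ := by
        by_contra hn
        have : γ' ∈ Bad := Finset.mem_filter.mpr ⟨hγ'P, hn⟩
        have := hmin γ' this
        linarith
      have hback : γ₀ = rf δ γ' := by rw [hγ', rf_rf]
      have : rf γ₀ = rf δ * rf γ' * (rf δ)⁻¹ := by
        rw [hback]; exact rf_conj (rf δ) γ'
      rw [this] at hγ₀n
      exact hγ₀n (WΔ.mul_mem (WΔ.mul_mem (Subgroup.subset_closure ⟨δ, hδ, rfl⟩) hγ'n)
        (WΔ.inv_mem (Subgroup.subset_closure ⟨δ, hδ, rfl⟩)))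
  -- Stage B : W ≤ WΔ
  have hwWΔ : w ∈ WΔ := by
    have h1 : (Subgroup.closure {u : EuclideanSpace ℝ (Fin q) ≃ₗᵢ[ℝ]
        EuclideanSpace ℝ (Fin q) | ∃ γ ∈ S.P, u = rf γ}) ≤ WΔ := by
      apply (Subgroup.closure_le _).mpr
      rintro u ⟨γ, hγ, rfl⟩
      exact stageA γ hγ
    exact h1 (S.sub hw)
  -- Stage C : extract a word
  refine Subgroup.closure_induction ?_ ?_ ?_ ?_ hwWΔ
  · rintro u ⟨δ, hδ, rfl⟩
    exact ⟨[δ], by simpa using hδ, by simp⟩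
  · exact ⟨[], by simp, by simp⟩
  · rintro u v _ _ ⟨L₁, hL₁, hp₁⟩ ⟨L₂, hL₂, hp₂⟩
    refine ⟨L₁ ++ L₂, ?_, ?_⟩
    · intro δ hδ
      rcases List.mem_append.mp hδ with h | h
      · exact hL₁ δ h
      · exact hL₂ δ h
    · rw [List.map_append, List.prod_append, hp₁, hp₂]
  · rintro u _ ⟨L, hL, hp⟩
    exact ⟨L.reverse, fun δ hδ => hL δ (List.mem_reverse.mp hδ),
      by rw [prod_rf_reverse, hp]⟩


/-- exchange lemma -/
lemma exchange : ∀ (L : List (EuclideanSpace ℝ (Fin q))), (∀ δ ∈ L, δ ∈ S.Δ) →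
    ∀ {δ : EuclideanSpace ℝ (Fin q)}, δ ∈ S.Δ → -(((L.map rf).prod) δ) ∈ S.P →
    ∃ L' : List (EuclideanSpace ℝ (Fin q)), (∀ μ ∈ L', μ ∈ S.Δ) ∧
      ((L'.map rf).prod) = ((L.map rf).prod) * rf δ ∧ L'.length + 1 ≤ L.length := by
  intro L
  induction L with
  | nil =>
    intro _ δ hδ hneg
    exfalso
    simp only [List.map_nil, List.prod_nil, LinearIsometryEquiv.coe_one, id_eq] at hneg
    exact S.not_neg_mem (S.ΔP hδ) hneg
  | cons μ M ih =>
    intro hmem δ hδ hneg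
    have hμΔ : μ ∈ S.Δ := hmem μ (List.mem_cons_self (a := μ) (l := M))
    have hMmem : ∀ x ∈ M, x ∈ S.Δ := fun x hx => hmem x (List.mem_cons_of_mem μ hx)
    set v := (M.map rf).prod with hv
    have happ : ((μ :: M).map rf).prod = rf μ * v := by
      rw [List.map_cons, List.prod_cons]
    have hvW : v ∈ S.W := S.prod_mem_W M (fun x hx => S.ΔP (hMmem x hx))
    have hneg' : -((rf μ) (v δ)) ∈ S.P := by
      rw [happ] at hneg
      exact hneg
    rcases S.stab v hvW δ (S.ΔP hδ) with hA | hA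
    swap
    · -- -(v δ) ∈ P : use the induction hypothesis
      obtain ⟨M', hM', hprod, hlen⟩ := ih hMmem hδ hA
      refine ⟨μ :: M', ?_, ?_, ?_⟩
      · intro x hx
        rcases List.mem_cons.mp hx with h | h
        · rw [h]; exact hμΔ
        · exact hM' x h
      · rw [List.map_cons, List.prod_cons, hprod, happ, mul_assoc]
      · simp only [List.length_cons]
        omega
    · -- v δ ∈ P
      have hpar : ∃ c : ℝ, v δ = c • μ := by
        by_contra hnp
        push_neg at hnp
        have := S.lem14a hμΔ hA hnp
        exact S.not_neg_mem this hneg'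
      obtain ⟨c, hc⟩ := hpar
      have hc0 : c ≠ 0 := by
        intro h
        rw [h, zero_smul] at hc
        exact S.mem_ne_zero hA hc
      have hrfeq : rf μ = v * rf δ * v⁻¹ := by
        have h1 : rf (v δ) = v * rf δ * v⁻¹ := rf_conj v δ
        have h2 : rf (v δ) = rf μ := by
          rw [hc]
          exact rf_smul (S.mem_ne_zero (S.ΔP hμΔ)) hc0
        rw [← h2, h1]
      refine ⟨M, hMmem, ?_, by simp⟩
      rw [happ, hrfeq]
      calc (M.map rf).prod = v * ((rf δ * v⁻¹ * v) * rf δ) := by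
            rw [inv_mul_cancel_right, rf_mul_self, mul_one]
        _ = v * rf δ * v⁻¹ * v * rf δ := by group

/-- an element of W sending no simple root to a negative root is the identity -/
lemma eq_one_of_no_neg {w : EuclideanSpace ℝ (Fin q) ≃ₗᵢ[ℝ] EuclideanSpace ℝ (Fin q)}
    (hw : w ∈ S.W) (hno : ∀ δ ∈ S.Δ, -(w δ) ∉ S.P) : w = 1 := by
  obtain ⟨L₀, hL₀, hp₀⟩ := S.exists_word hw
  set Q : ℕ → Prop := fun n => ∃ L : List (EuclideanSpace ℝ (Fin q)),
    (∀ δ ∈ L, δ ∈ S.Δ) ∧ (L.map rf).prod = w ∧ L.length = n with hQ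
  have hex : ∃ n, Q n := ⟨L₀.length, L₀, hL₀, hp₀, rfl⟩
  obtain ⟨L, hL, hp, hlen⟩ := Nat.find_spec hex
  rcases List.eq_nil_or_concat L with hnil | ⟨L₁, δ, hcat⟩
  · rw [hnil] at hp
    simpa using hp.symm
  · exfalso
    have hδΔ : δ ∈ S.Δ := hL δ (by rw [hcat, List.concat_eq_append]; exact List.mem_append.mpr (Or.inr (List.mem_singleton.mpr rfl)))
    have hL₁mem : ∀ x ∈ L₁, x ∈ S.Δ := fun x hx =>
      hL x (by rw [hcat, List.concat_eq_append]; exact List.mem_append.mpr (Or.inl hx))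
    have hδ0 : δ ≠ 0 := S.mem_ne_zero (S.ΔP hδΔ)
    have hsplit : w = (L₁.map rf).prod * rf δ := by
      rw [← hp, hcat, List.concat_eq_append, List.map_append, List.prod_append]
      simp
    have hwδP : w δ ∈ S.P := by
      rcases S.stab w hw δ (S.ΔP hδΔ) with h | h
      · exact h
      · exact absurd h (hno δ hδΔ)
    have hvneg : -(((L₁.map rf).prod) δ) ∈ S.P := by
      have h1 : ((L₁.map rf).prod) δ = w (rf δ δ) := by
        rw [hsplit]
        have : ((L₁.map rf).prod * rf δ) (rf δ δ) = (L₁.map rf).prod (rf δ (rf δ δ)) := rfl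
        rw [this, rf_rf]
      rw [h1, rf_apply_self δ hδ0, map_neg, neg_neg]
      exact hwδP
    obtain ⟨L', hL', hprod, hlen'⟩ := S.exchange L₁ hL₁mem hδΔ hvneg
    have hprodw : (L'.map rf).prod = w := hprod.trans hsplit.symm
    have hQL' : Q L'.length := ⟨L', hL', hprodw, rfl⟩
    have hlt : L'.length < Nat.find hex := by
      have h1 : L.length = L₁.length + 1 := by rw [hcat, List.concat_eq_append]; simp
      omega
    exact Nat.find_min hex hlt hQL'

/-- the dominance lemma -/
lemma dominance {w : EuclideanSpace ℝ (Fin q) ≃ₗᵢ[ℝ] EuclideanSpace ℝ (Fin q)}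
    (hw : w ∈ S.W) (x t : EuclideanSpace ℝ (Fin q))
    (hx : ∀ γ ∈ S.P, 0 ≤ ⟪x, γ⟫) (ht : ∀ γ ∈ S.P, 0 ≤ ⟪t, γ⟫) :
    ⟪w x, t⟫ ≤ ⟪x, t⟫ := by
  suffices H : ∀ n : ℕ, ∀ w : EuclideanSpace ℝ (Fin q) ≃ₗᵢ[ℝ] EuclideanSpace ℝ (Fin q),
      w ∈ S.W → (S.NN w).card = n → ⟪w x, t⟫ ≤ ⟪x, t⟫ by
    exact H (S.NN w).card w hw rfl
  intro n
  induction n using Nat.strong_induction_on with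
  | _ n ih =>
    intro w hw hcard
    by_cases hex : ∃ δ ∈ S.Δ, -(w δ) ∈ S.P
    · obtain ⟨δ, hδ, hneg⟩ := hex
      have hδ0 : δ ≠ 0 := S.mem_ne_zero (S.ΔP hδ)
      set w' := w * rf δ with hw'
      have hw'W : w' ∈ S.W := S.W.mul_mem hw (S.gen δ (S.ΔP hδ))
      have hcount : (S.NN w').card < n := by
        rw [← hcard]
        exact S.count_lt hw hδ hneg
      have hIH : ⟪w' x, t⟫ ≤ ⟪x, t⟫ := ih _ hcount w' hw'W rfl
      set k : ℝ := 2 * ⟪δ, x⟫ / ‖δ‖ ^ 2 with hk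
      have hknn : 0 ≤ k := by
        apply div_nonneg
        · have := hx δ (S.ΔP hδ)
          rw [real_inner_comm] at this
          linarith
        · positivity
      have hwx : w x = w' x - k • (w' δ) := by
        have h1 : w x = w' (rf δ x) := by
          have : (w' * rf δ) x = w' (rf δ x) := rfl
          rw [← this, hw', mul_assoc, rf_mul_self, mul_one]
        rw [h1, rf_apply, map_sub, map_smul]
      have hw'δ : w' δ = -(w δ) := by
        have : w' δ = w (rf δ δ) := rfl
        rw [this, rf_apply_self δ hδ0, map_neg]
      have htw'δ : 0 ≤ ⟪w' δ, t⟫ := by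
        rw [real_inner_comm, hw'δ]
        exact ht _ hneg
      rw [hwx, inner_sub_left, real_inner_smul_left]
      nlinarith
    · push_neg at hex
      have : w = 1 := S.eq_one_of_no_neg hw hex
      rw [this]
      simp

end Ctx

/-- a vector avoiding finitely many hyperplanes -/
lemma exists_generic (T : Finset (EuclideanSpace ℝ (Fin q))) (hT : ∀ α ∈ T, α ≠ 0) :
    ∃ v : EuclideanSpace ℝ (Fin q), ∀ α ∈ T, ⟪v, α⟫ ≠ 0 := by
  induction T using Finset.induction_on with
  | empty => exact ⟨0, by simp⟩
  | @insert γ T hγT ih =>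
    obtain ⟨v, hv⟩ := ih (fun α hα => hT α (Finset.mem_insert_of_mem hα))
    have hγ0 : γ ≠ 0 := hT γ (Finset.mem_insert_self γ T)
    have hγn : (0:ℝ) < ‖γ‖ ^ 2 := pow_pos (norm_pos_iff.mpr hγ0) 2
    set F : Finset ℝ := insert (-⟪v, γ⟫ / ‖γ‖ ^ 2)
      (T.image (fun μ => -⟪v, μ⟫ / ⟪γ, μ⟫)) with hF
    obtain ⟨c, hc⟩ := Infinite.exists_notMem_finset F
    refine ⟨v + c • γ, ?_⟩
    intro α hα
    rcases Finset.mem_insert.mp hα with rfl | hαT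
    · rw [inner_add_left, real_inner_smul_left, real_inner_self_eq_norm_sq]
      intro h
      apply hc
      have hcval : c = -⟪v, α⟫ / ‖α‖ ^ 2 := by
        rw [eq_div_iff hγn.ne']
        linarith
      rw [hF, hcval]
      exact Finset.mem_insert_self _ _
    · rw [inner_add_left, real_inner_smul_left]
      by_cases hz : ⟪γ, α⟫ = 0
      · rw [hz, mul_zero, add_zero]
        exact hv α hαT
      · intro h
        apply hc
        have hcval : c = -⟪v, α⟫ / ⟪γ, α⟫ := by
          rw [eq_div_iff hz]
          linarith
        rw [hF, hcval]
        exact Finset.mem_insert_of_mem (Finset.mem_image_of_mem _ hαT)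

end Stmt6Aux

open Stmt6Aux

/-- If `ξ` lies in the interior of the convex hull of the orbit `W·ρ`, then
`ξ ∈ co(W·(s·ρ))` for some `0 < s < 1`, and with `ε = 1 - s` one has
`⟨ξ - ρ, t⟩ ≤ -ε·⟨ρ, t⟩` for all `t` in the chamber `C`. -/
theorem stmt_6 (q : ℕ) (Rp : Finset (EuclideanSpace ℝ (Fin q)))
    (hR0 : ∀ α ∈ Rp, α ≠ 0)
    (W : Subgroup (EuclideanSpace ℝ (Fin q) ≃ₗᵢ[ℝ] EuclideanSpace ℝ (Fin q)))
    (hWfin : Finite W)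
    (hWgen : W = Subgroup.closure
      {w | ∃ α ∈ Rp, w = Submodule.reflection ((ℝ ∙ α)ᗮ : Submodule ℝ (EuclideanSpace ℝ (Fin q)))})
    (hWR : ∀ w ∈ W, ∀ α ∈ Rp, w α ∈ (Rp : Set (EuclideanSpace ℝ (Fin q))) ∨
      -(w α) ∈ (Rp : Set (EuclideanSpace ℝ (Fin q))))
    (C : Set (EuclideanSpace ℝ (Fin q)))
    (hC : C = {x | ∀ α ∈ Rp, 0 ≤ ⟪x, α⟫})
    (ρ ξ : EuclideanSpace ℝ (Fin q)) (hρ : ρ ∈ C) (hξ : ξ ∈ C)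
    (hint : ξ ∈ interior (convexHull ℝ
      ((fun w : EuclideanSpace ℝ (Fin q) ≃ₗᵢ[ℝ] EuclideanSpace ℝ (Fin q) => w ρ) ''
        (W : Set (EuclideanSpace ℝ (Fin q) ≃ₗᵢ[ℝ] EuclideanSpace ℝ (Fin q)))))) :
    ∃ s : ℝ, 0 < s ∧ s < 1 ∧
      ξ ∈ convexHull ℝ
        ((fun w : EuclideanSpace ℝ (Fin q) ≃ₗᵢ[ℝ] EuclideanSpace ℝ (Fin q) => w (s • ρ)) ''
          (W : Set (EuclideanSpace ℝ (Fin q) ≃ₗᵢ[ℝ] EuclideanSpace ℝ (Fin q)))) ∧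
      ∀ t ∈ C, ⟪ξ - ρ, t⟫ ≤ -((1 - s) * ⟪ρ, t⟫) := by
  classical
  -- basic chamber facts
  have hCpos : ∀ x ∈ C, ∀ α ∈ Rp, 0 ≤ ⟪x, α⟫ := by rw [hC]; exact fun x hx => hx
  have hCzero : (0 : EuclideanSpace ℝ (Fin q)) ∈ C := by
    rw [hC]; intro α _; rw [inner_zero_left]
  have hCadd : ∀ x ∈ C, ∀ y ∈ C, x + y ∈ C := by
    rw [hC]
    rintro x hx y hy α hα
    rw [inner_add_left]
    exact add_nonneg (hx α hα) (hy α hα)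
  -- split the roots according to whether they vanish on the chamber
  set Rz := Rp.filter (fun α => ∀ x ∈ C, ⟪x, α⟫ = 0) with hRzdef
  set Rp' := Rp.filter (fun α => ¬ ∀ x ∈ C, ⟪x, α⟫ = 0) with hRp'def
  have hch : ∀ α ∈ Rp', ∃ x, x ∈ C ∧ 0 < ⟪x, α⟫ := by
    intro α hα
    obtain ⟨hαR, hne⟩ := Finset.mem_filter.mp hα
    push_neg at hne
    obtain ⟨x, hxC, hx0⟩ := hne
    exact ⟨x, hxC, lt_of_le_of_ne (hCpos x hxC α hαR) (Ne.symm hx0)⟩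
  set xf : {a // a ∈ Rp'} → EuclideanSpace ℝ (Fin q) := fun a => (hch a.1 a.2).choose with hxf
  have hxfC : ∀ a, xf a ∈ C := fun a => (hch a.1 a.2).choose_spec.1
  have hxfpos : ∀ a, 0 < ⟪xf a, a.1⟫ := fun a => (hch a.1 a.2).choose_spec.2
  set g := ∑ a ∈ Rp'.attach, xf a with hg
  have hgC : g ∈ C :=
    Finset.sum_induction xf (· ∈ C) (fun x y hx hy => hCadd x hx y hy) hCzero
      (fun a _ => hxfC a)
  have hgpos : ∀ α ∈ Rp', 0 < ⟪g, α⟫ := by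
    intro α hα
    rw [hg, sum_inner]
    exact Finset.sum_pos'
      (fun a _ => hCpos _ (hxfC a) α (Finset.mem_of_mem_filter α hα))
      ⟨⟨α, hα⟩, Finset.mem_attach _ _, hxfpos ⟨α, hα⟩⟩
  -- a generic vector
  obtain ⟨h₀, hh₀⟩ := exists_generic Rp hR0
  -- the combined positivity vector
  obtain ⟨hv, hv1, hv2⟩ : ∃ hv : EuclideanSpace ℝ (Fin q),
      (∀ α ∈ Rp, ⟪hv, α⟫ ≠ 0) ∧ (∀ α ∈ Rp', 0 < ⟪hv, α⟫) := by
    rcases Rp'.eq_empty_or_nonempty with hemp | hne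
    · exact ⟨h₀, hh₀, by rw [hemp]; intro α h; exact absurd h (Finset.notMem_empty α)⟩
    · set ε := Rp'.inf' hne (fun α => ⟪g, α⟫ / (|⟪h₀, α⟫| + 1)) with hεdef
      have hεpos : 0 < ε := by
        rw [hεdef, Finset.lt_inf'_iff]
        intro α hα
        have h1 := hgpos α hα
        positivity
      have hkey : ∀ α ∈ Rp', 0 < ⟪g + ε • h₀, α⟫ := by
        intro α hα
        rw [inner_add_left, real_inner_smul_left]
        have hle : ε ≤ ⟪g, α⟫ / (|⟪h₀, α⟫| + 1) := Finset.inf'_le _ hα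
        have hpos : (0:ℝ) < |⟪h₀, α⟫| + 1 := by positivity
        have h2 : ε * (|⟪h₀, α⟫| + 1) ≤ ⟪g, α⟫ := (le_div_iff₀ hpos).mp hle
        nlinarith [neg_abs_le (⟪h₀, α⟫), hεpos, abs_nonneg (⟪h₀, α⟫)]
      refine ⟨g + ε • h₀, ?_, hkey⟩
      intro α hα
      by_cases hmem : α ∈ Rp'
      · exact (hkey α hmem).ne'
      · have hz : ∀ x ∈ C, ⟪x, α⟫ = 0 := by
          by_contra hcon
          exact hmem (Finset.mem_filter.mpr ⟨hα, hcon⟩)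
        rw [inner_add_left, real_inner_smul_left, hz g hgC, zero_add]
        exact mul_ne_zero hεpos.ne' (hh₀ α hα)
  -- the positive system
  set P := (Rp ∪ Rp.image (fun α => -α)).filter (fun γ => 0 < ⟪hv, γ⟫) with hPdef
  have hmemP : ∀ γ, γ ∈ P ↔ (γ ∈ Rp ∨ -γ ∈ Rp) ∧ 0 < ⟪hv, γ⟫ := by
    intro γ
    rw [hPdef, Finset.mem_filter, Finset.mem_union]
    constructor
    · rintro ⟨h1, h2⟩
      refine ⟨?_, h2⟩
      rcases h1 with h | h
      · exact Or.inl h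
      · obtain ⟨a, ha, rfl⟩ := Finset.mem_image.mp h
        rw [neg_neg]; exact Or.inr ha
    · rintro ⟨h1, h2⟩
      refine ⟨?_, h2⟩
      rcases h1 with h | h
      · exact Or.inl h
      · exact Or.inr (Finset.mem_image.mpr ⟨-γ, h, neg_neg γ⟩)
  have hPne : ∀ γ ∈ P, γ ≠ 0 := by
    intro γ hγ h0
    have := ((hmemP γ).mp hγ).2
    rw [h0, inner_zero_right] at this
    exact lt_irrefl _ this
  have hPc : ∀ α ∈ Rp, α ∈ P ∨ -α ∈ P := by
    intro α hα
    rcases lt_or_gt_of_ne (hv1 α hα) with h | h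
    · right
      exact (hmemP _).mpr ⟨Or.inr (by rw [neg_neg]; exact hα),
        by rw [inner_neg_right]; linarith⟩
    · left; exact (hmemP _).mpr ⟨Or.inl hα, h⟩
  have hrfP : ∀ α ∈ Rp, ∃ γ ∈ P, rf γ = rf α := by
    intro α hα
    rcases hPc α hα with h | h
    · exact ⟨α, h, rfl⟩
    · exact ⟨-α, h, rf_neg (hR0 α hα)⟩
  have hgen : ∀ γ ∈ P, rf γ ∈ W := by
    intro γ hγ
    obtain ⟨hγR, _⟩ := (hmemP γ).mp hγ
    rcases hγR with h | h
    · rw [hWgen]; exact Subgroup.subset_closure ⟨γ, h, rfl⟩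
    · have : rf γ = rf (-γ) := (rf_neg (hPne γ hγ)).symm
      rw [this, hWgen]
      exact Subgroup.subset_closure ⟨-γ, h, rfl⟩
  have hstab : ∀ w ∈ W, ∀ γ ∈ P, w γ ∈ P ∨ -(w γ) ∈ P := by
    intro w hw γ hγ
    obtain ⟨hγR, _⟩ := (hmemP γ).mp hγ
    have hwγR : w γ ∈ Rp ∨ -(w γ) ∈ Rp := by
      rcases hγR with h | h
      · rcases hWR w hw γ h with h' | h'
        · exact Or.inl (Finset.mem_coe.mp h')
        · exact Or.inr (Finset.mem_coe.mp h')
      · rcases hWR w hw (-γ) h with h' | h'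
        · right
          rw [map_neg] at h'
          exact Finset.mem_coe.mp h'
        · left
          rw [map_neg, neg_neg] at h'
          exact Finset.mem_coe.mp h'
    have hvnz : ⟪hv, w γ⟫ ≠ 0 := by
      rcases hwγR with h | h
      · exact hv1 _ h
      · have h2 := hv1 _ h
        rw [inner_neg_right] at h2
        intro h0
        rw [h0] at h2
        simp at h2
    rcases lt_or_gt_of_ne hvnz with h | h
    · right
      refine (hmemP _).mpr ⟨?_, by rw [inner_neg_right]; linarith⟩
      rcases hwγR with h' | h'
      · exact Or.inr (by rwa [neg_neg])
      · exact Or.inl h'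
    · left; exact (hmemP _).mpr ⟨hwγR, h⟩
  have hsub : (W : Set (EuclideanSpace ℝ (Fin q) ≃ₗᵢ[ℝ] EuclideanSpace ℝ (Fin q))) ⊆
      ↑(Subgroup.closure {u : EuclideanSpace ℝ (Fin q) ≃ₗᵢ[ℝ] EuclideanSpace ℝ (Fin q) |
        ∃ γ ∈ P, u = rf γ}) := by
    intro w hw
    rw [hWgen] at hw
    refine (Subgroup.closure_le _).mpr ?_ hw
    rintro u ⟨α, hα, rfl⟩
    obtain ⟨γ, hγ, heq⟩ := hrfP α hα
    exact Subgroup.subset_closure ⟨γ, hγ, heq.symm⟩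
  -- a minimal generating subset (the simple roots)
  set Good := P.powerset.filter (fun T => ∀ γ ∈ P, Pos T γ) with hGooddef
  have hGoodne : Good.Nonempty :=
    ⟨P, Finset.mem_filter.mpr ⟨Finset.mem_powerset_self P, fun γ hγ => pos_self hγ⟩⟩
  obtain ⟨Δ, hΔGood, hΔmin⟩ := Finset.exists_min_image Good (fun T => T.card) hGoodne
  obtain ⟨hΔpow, hΔgen⟩ := Finset.mem_filter.mp hΔGood
  set S : Stmt6Aux.Ctx q :=
    { P := P, hv := hv, W := W,
      pos := fun γ hγ => ((hmemP γ).mp hγ).2,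
      gen := hgen, stab := hstab, sub := hsub,
      Δ := Δ, ΔP := Finset.mem_powerset.mp hΔpow, Δgen := hΔgen,
      Δmin := fun T hT hTgen =>
        hΔmin T (Finset.mem_filter.mpr ⟨Finset.mem_powerset.mpr hT, hTgen⟩) } with hSdef
  -- elements of the chamber are dominant for P
  have hCP : ∀ x ∈ C, ∀ γ ∈ P, 0 ≤ ⟪x, γ⟫ := by
    intro x hx γ hγ
    obtain ⟨hγR, hγpos⟩ := (hmemP γ).mp hγ
    rcases hγR with h | h
    · exact hCpos x hx γ h
    · have hnR' : -γ ∉ Rp' := by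
        intro hmem'
        have h2 := hv2 _ hmem'
        rw [inner_neg_right] at h2
        linarith
      have hz : ∀ y ∈ C, ⟪y, -γ⟫ = 0 := by
        by_contra hcon
        exact hnR' (Finset.mem_filter.mpr ⟨h, hcon⟩)
      have h3 := hz x hx
      rw [inner_neg_right] at h3
      linarith [neg_eq_zero.mp h3]
  -- the key dominance estimate
  have key : ∀ w ∈ W, ∀ t ∈ C, ⟪w ρ, t⟫ ≤ ⟪ρ, t⟫ := fun w hw t ht =>
    S.dominance hw ρ t (hCP ρ hρ) (hCP t ht)
  -- find the dilation parameter s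
  set Orb := (fun w : EuclideanSpace ℝ (Fin q) ≃ₗᵢ[ℝ] EuclideanSpace ℝ (Fin q) => w ρ) ''
    (W : Set (EuclideanSpace ℝ (Fin q) ≃ₗᵢ[ℝ] EuclideanSpace ℝ (Fin q))) with hOrbdef
  set K := convexHull ℝ Orb with hKdef
  obtain ⟨s, hs0, hs1, hsK⟩ : ∃ s : ℝ, 0 < s ∧ s < 1 ∧ s⁻¹ • ξ ∈ K := by
    by_cases hξ0 : ξ = 0
    · exact ⟨1/2, by norm_num, by norm_num,
        by rw [hξ0, smul_zero]; rw [hξ0] at hint; exact interior_subset hint⟩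
    · have hopen : IsOpen {c : ℝ | c • ξ ∈ interior K} :=
        isOpen_interior.preimage (continuous_id.smul continuous_const)
      have h1mem : (1:ℝ) ∈ {c : ℝ | c • ξ ∈ interior K} := by
        rw [Set.mem_setOf_eq, one_smul]
        exact hint
      obtain ⟨r, hr, hball⟩ := Metric.isOpen_iff.mp hopen 1 h1mem
      have hcm : (1 + r/2) ∈ {c : ℝ | c • ξ ∈ interior K} := by
        apply hball
        rw [Metric.mem_ball, Real.dist_eq]
        rw [show (1 + r/2 - 1 : ℝ) = r/2 by ring, abs_of_pos (by linarith)]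
        linarith
      refine ⟨(1 + r/2)⁻¹, by positivity, ?_, ?_⟩
      · rw [inv_lt_one_iff₀]
        right
        linarith
      · rw [inv_inv]
        exact interior_subset hcm
  have hmemhull : ξ ∈ convexHull ℝ
      ((fun w : EuclideanSpace ℝ (Fin q) ≃ₗᵢ[ℝ] EuclideanSpace ℝ (Fin q) => w (s • ρ)) ''
        (W : Set (EuclideanSpace ℝ (Fin q) ≃ₗᵢ[ℝ] EuclideanSpace ℝ (Fin q)))) := by
    have himg : ((fun w : EuclideanSpace ℝ (Fin q) ≃ₗᵢ[ℝ] EuclideanSpace ℝ (Fin q) =>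
        w (s • ρ)) '' (W : Set (EuclideanSpace ℝ (Fin q) ≃ₗᵢ[ℝ] EuclideanSpace ℝ (Fin q))))
        = s • Orb := by
      rw [hOrbdef, ← Set.image_smul, Set.image_image]
      apply Set.image_congr
      intro w _
      exact LinearIsometryEquiv.map_smul (e := w) s ρ
    rw [himg, convexHull_smul, ← hKdef]
    exact Set.mem_smul_set.mpr ⟨s⁻¹ • ξ, hsK,
      by rw [smul_smul, mul_inv_cancel₀ hs0.ne', one_smul]⟩
  refine ⟨s, hs0, hs1, hmemhull, ?_⟩
  intro t ht
  have hconv : Convex ℝ {z : EuclideanSpace ℝ (Fin q) | ⟪z, t⟫ ≤ s * ⟪ρ, t⟫} :=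
    convex_halfSpace_le
      ⟨fun a b => inner_add_left a b t, fun c a => real_inner_smul_left a t c⟩ _
  have hsubs : ((fun w : EuclideanSpace ℝ (Fin q) ≃ₗᵢ[ℝ] EuclideanSpace ℝ (Fin q) =>
      w (s • ρ)) '' (W : Set (EuclideanSpace ℝ (Fin q) ≃ₗᵢ[ℝ] EuclideanSpace ℝ (Fin q))))
      ⊆ {z : EuclideanSpace ℝ (Fin q) | ⟪z, t⟫ ≤ s * ⟪ρ, t⟫} := by
    rintro z ⟨w, hw, rfl⟩
    have hzs : w (s • ρ) = s • w ρ := LinearIsometryEquiv.map_smul (e := w) s ρ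
    show ⟪w (s • ρ), t⟫ ≤ s * ⟪ρ, t⟫
    rw [hzs, real_inner_smul_left]
    exact mul_le_mul_of_nonneg_left (key w hw t ht) hs0.le
  have hhalf := convexHull_min hsubs hconv hmemhull
  rw [Set.mem_setOf_eq] at hhalf
  rw [inner_sub_left]
  linarith [hhalf]
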